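/- Let r ≥ 2 be an integer and let H be an r-uniform hypergraph on n vertices with average degree d = r|E(H)|/n, and suppose d ≥ 1. Then H contains an independent set of size at least 0.5 · n / d^{1/(r−1)}. -/

import Mathlib

open Finset

section Defs

variable {α : Type*} [DecidableEq α]

/-- `e 0, …, e (l-1)` form a loose cycle of length `l`: distinct edges, each of size
at least 2, cyclically consecutive edges meet in exactly one vertex, all other pairs
of edges are disjoint. -/
def IsLooseCycleOn (l : ℕ) (e : ℕ → Finset α) : Prop :=
  (∀ i < l, ∀ j < l, i ≠ j → e i ≠ e j) ∧
  (∀ i < l, 2 ≤ (e i).card) ∧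
  (∀ i < l, (e i ∩ e ((i + 1) % l)).card = 1) ∧
  (∀ i < l, ∀ j < l, j ≠ i → j ≠ (i + 1) % l → i ≠ (j + 1) % l → e i ∩ e j = ∅)

/-- A hypergraph with edge set `E` contains a loose cycle of length `l`. -/
def ContainsLooseCycle (l : ℕ) (E : Set (Finset α)) : Prop :=
  ∃ e : ℕ → Finset α, IsLooseCycleOn l e ∧ ∀ i < l, e i ∈ E

/-- A hypergraph with edge set `E` contains an `r`-uniform loose cycle of length `l`. -/
def ContainsUniformLooseCycle (r l : ℕ) (E : Set (Finset α)) : Prop :=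
  ∃ e : ℕ → Finset α, IsLooseCycleOn l e ∧ (∀ i < l, (e i).card = r) ∧ ∀ i < l, e i ∈ E

/-- `f 0, …, f (k-1)` form a simple path of length `k`: each edge has size at least 2,
consecutive edges meet, non-consecutive edges are disjoint, and any two distinct
edges meet in at most one vertex. -/
def IsSimplePathOn (k : ℕ) (f : ℕ → Finset α) : Prop :=
  (∀ i < k, 2 ≤ (f i).card) ∧
  (∀ i, i + 1 < k → (f i ∩ f (i + 1)).Nonempty) ∧
  (∀ i < k, ∀ j < k, i < j → j ≠ i + 1 → f i ∩ f j = ∅) ∧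
  (∀ i < k, ∀ j < k, i ≠ j → (f i ∩ f j).card ≤ 1)

/-- The simple path `f 0, …, f (k-1)` joins `a` to `b`. -/
def SimplePathJoins (k : ℕ) (f : ℕ → Finset α) (a b : α) : Prop :=
  IsSimplePathOn k f ∧ a ∈ f 0 ∧ b ∈ f (k - 1) ∧
  (2 ≤ k → a ∉ f 1 ∧ b ∉ f (k - 2))

/-- `p` is a heavy pair of the 3-graph `H` (with respect to the parameter `l`):
it is a pair of vertices contained in at least `2l-2` edges of `H`. -/
def PairHeavy (l : ℕ) (H : Finset (Finset α)) (p : Finset α) : Prop :=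
  p.card = 2 ∧ 2 * l - 2 ≤ (H.filter fun e => p ⊆ e).card

/-- `e` is a light edge of the 3-graph `H`: an edge of `H` containing no heavy pair. -/
def EdgeLight (l : ℕ) (H : Finset (Finset α)) (e : Finset α) : Prop :=
  e ∈ H ∧ ∀ p ⊆ e, ¬ PairHeavy l H p

/-- The reduced hypergraph `H*` of a 3-graph `H`: its edges are the light edges of `H`
together with the heavy pairs of `H`. -/
def Reduced (l : ℕ) (H : Finset (Finset α)) : Set (Finset α) :=
  {e | EdgeLight l H e ∨ PairHeavy l H e}

/-- `(X, Y)` is an extender in the 3-graph `H`. -/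
def IsExtender (l : ℕ) (H : Finset (Finset α)) (X Y : Finset α) : Prop :=
  Disjoint X Y ∧ Y.card ≤ 2 * X.card ∧
  ∀ u ∈ X, ∀ v ∈ X, u ≠ v → ∀ S : Finset α,
    Disjoint S ({u, v} ∪ Y) → S.card ≤ 2 * l - 5 →
      ∃ f : ℕ → Finset α, SimplePathJoins 2 f u v ∧ (∀ i < 2, f i ∈ H) ∧
        ∀ i < 2, Disjoint (f i) S

/-- `X` is an independent set of the hypergraph with edge set `E`. -/
def IndepIn (E : Set (Finset α)) (X : Finset α) : Prop := ∀ e ∈ E, ¬ e ⊆ X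

end Defs

section AuxSpencer
variable {α : Type*} [DecidableEq α]


lemma deletion (H : Finset (Finset α)) (hne : ∀ e ∈ H, e.Nonempty) :
    ∀ S : Finset α, ∃ X, X ⊆ S ∧ IndepIn (↑H) X ∧
      S.card ≤ X.card + (H.filter fun e => e ⊆ S).card := by
  intro S
  induction S using Finset.strongInduction with
  | _ S ih =>
    by_cases h : (H.filter fun e => e ⊆ S) = ∅
    · refine ⟨S, subset_rfl, ?_, by simp⟩
      intro e he hsub
      have : e ∈ H.filter fun e => e ⊆ S := Finset.mem_filter.mpr ⟨he, hsub⟩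
      simp [h] at this
    · obtain ⟨e, hef⟩ := Finset.nonempty_iff_ne_empty.mpr h
      rw [Finset.mem_filter] at hef
      obtain ⟨heH, heS⟩ := hef
      obtain ⟨v, hv⟩ := hne e heH
      have hvS : v ∈ S := heS hv
      have hss : S.erase v ⊂ S := Finset.erase_ssubset hvS
      obtain ⟨X, hXsub, hXind, hXcard⟩ := ih _ hss
      refine ⟨X, hXsub.trans (Finset.erase_subset _ _), hXind, ?_⟩
      have hmono : (H.filter fun e => e ⊆ S.erase v) ⊆ (H.filter fun e => e ⊆ S) :=
        Finset.monotone_filter_right H (fun a _ h => h.trans (Finset.erase_subset _ _))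
      have hstrict : (H.filter fun e => e ⊆ S.erase v) ⊂ (H.filter fun e => e ⊆ S) := by
        refine Finset.ssubset_iff_of_subset hmono |>.mpr ⟨e, Finset.mem_filter.mpr ⟨heH, heS⟩, ?_⟩
        intro hmem
        exact (Finset.notMem_erase v S) ((Finset.mem_filter.mp hmem).2 hv)
      have hcc := Finset.card_lt_card hstrict
      have hce := Finset.card_erase_add_one hvS
      omega

lemma sum_weight (p : ℝ) (s : Finset α) :
    ∑ T ∈ s.powerset, p ^ T.card * (1 - p) ^ (s.card - T.card) = 1 := by
  have h := Finset.prod_add (fun _ : α => p) (fun _ => 1 - p) s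
  simp only [add_sub_cancel, Finset.prod_const, one_pow] at h
  refine Eq.trans (Finset.sum_congr rfl ?_) h.symm
  intro T hT
  rw [Finset.card_sdiff_of_subset (Finset.mem_powerset.mp hT)]

lemma sum_weight_superset (p : ℝ) (s e : Finset α) (hes : e ⊆ s) :
    ∑ T ∈ s.powerset.filter (fun T => e ⊆ T), p ^ T.card * (1 - p) ^ (s.card - T.card)
      = p ^ e.card := by
  have key : ∑ T ∈ (s \ e).powerset, p ^ (T ∪ e).card * (1 - p) ^ (s.card - (T ∪ e).card)
      = ∑ T ∈ s.powerset.filter (fun T => e ⊆ T), p ^ T.card * (1 - p) ^ (s.card - T.card) := by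
    refine Finset.sum_nbij' (i := fun T => T ∪ e) (j := fun T => T \ e) ?_ ?_ ?_ ?_ ?_
    · intro T hT
      rw [Finset.mem_powerset] at hT
      refine Finset.mem_filter.mpr ⟨Finset.mem_powerset.mpr ?_, Finset.subset_union_right⟩
      exact Finset.union_subset (hT.trans (Finset.sdiff_subset)) hes
    · intro T hT
      rw [Finset.mem_filter, Finset.mem_powerset] at hT
      exact Finset.mem_powerset.mpr (Finset.sdiff_subset_sdiff hT.1 subset_rfl)
    · intro T hT
      rw [Finset.mem_powerset] at hT
      have hdisj : Disjoint T e := (disjoint_sdiff_self_left (x := e) (y := s)).mono_left hT  -- maybe wrong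
      show (T ∪ e) \ e = T
      rw [Finset.union_sdiff_right]
      exact Finset.sdiff_eq_self_of_disjoint hdisj
    · intro T hT
      rw [Finset.mem_filter] at hT
      exact Finset.sdiff_union_of_subset hT.2
    · intro T hT; rfl
  rw [← key]
  have hecard : e.card ≤ s.card := Finset.card_le_card hes
  have hsde : (s \ e).card = s.card - e.card := Finset.card_sdiff_of_subset hes
  have : ∀ T ∈ (s \ e).powerset,
      p ^ (T ∪ e).card * (1 - p) ^ (s.card - (T ∪ e).card)
        = p ^ e.card * (p ^ T.card * (1 - p) ^ ((s \ e).card - T.card)) := by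
    intro T hT
    rw [Finset.mem_powerset] at hT
    have hdisj : Disjoint T e := (disjoint_sdiff_self_left (x := e) (y := s)).mono_left hT
    have hcu : (T ∪ e).card = T.card + e.card := Finset.card_union_of_disjoint hdisj
    have hTs : T.card ≤ (s \ e).card := Finset.card_le_card hT
    rw [hcu, pow_add, hsde]
    have : s.card - (T.card + e.card) = s.card - e.card - T.card := by omega
    rw [this]; ring
  rw [Finset.sum_congr rfl this, ← Finset.mul_sum, sum_weight p (s \ e), mul_one]

lemma exists_ge_of_wsum {β : Type*} (s : Finset β) (w f : β → ℝ)
    (hw : ∀ b ∈ s, 0 ≤ w b) (hsum : ∑ b ∈ s, w b = 1) (c : ℝ)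
    (h : c ≤ ∑ b ∈ s, w b * f b) : ∃ b ∈ s, c ≤ f b := by
  by_contra hc
  push_neg at hc
  obtain ⟨b0, hb0, hwb0⟩ : ∃ b ∈ s, w b ≠ 0 := by
    by_contra h0
    push_neg at h0
    rw [Finset.sum_eq_zero h0] at hsum
    norm_num at hsum
  have hlt : ∑ b ∈ s, w b * f b < ∑ b ∈ s, w b * c := by
    refine Finset.sum_lt_sum (fun b hb => ?_) ⟨b0, hb0, ?_⟩
    · exact mul_le_mul_of_nonneg_left (le_of_lt (hc b hb)) (hw b hb)
    · exact mul_lt_mul_of_pos_left (hc b0 hb0) (lt_of_le_of_ne (hw b0 hb0) (Ne.symm hwb0))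
  rw [← Finset.sum_mul, hsum, one_mul] at hlt
  linarith


lemma spencer_aux {α : Type*} [DecidableEq α] [Fintype α] (r : ℕ)
    (hr : 2 ≤ r) (H : Finset (Finset α)) (hH : ∀ e ∈ H, e.card = r)
    (p : ℝ) (hp0 : 0 < p) (hp1 : p ≤ 1) :
    ∃ X : Finset α, IndepIn (↑H : Set (Finset α)) X ∧
      p * (Fintype.card α : ℝ) - (H.card : ℝ) * p ^ r ≤ (X.card : ℝ) := by
  classical
  let V : Finset α := Finset.univ
  let w : Finset α → ℝ := fun S => p ^ S.card * (1 - p) ^ (V.card - S.card)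
  have hwnn : ∀ S, 0 ≤ w S := fun S =>
    mul_nonneg (pow_nonneg hp0.le _) (pow_nonneg (by linarith) _)
  have hwsum : ∑ S ∈ V.powerset, w S = 1 := sum_weight p V
  -- expectation of |S|
  have hsum_card : ∑ S ∈ V.powerset, w S * (S.card : ℝ) = p * V.card := by
    have hc : ∀ S : Finset α, (S.card : ℝ) = ∑ v ∈ V, if v ∈ S then (1:ℝ) else 0 := by
      intro S
      simp [V, Finset.sum_ite_mem, Finset.univ_inter]
    calc ∑ S ∈ V.powerset, w S * (S.card : ℝ)
        = ∑ S ∈ V.powerset, ∑ v ∈ V, (if v ∈ S then w S else 0) := by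
          refine Finset.sum_congr rfl fun S _ => ?_
          rw [hc S, Finset.mul_sum]
          refine Finset.sum_congr rfl fun v _ => ?_
          split <;> simp
      _ = ∑ v ∈ V, ∑ S ∈ V.powerset, (if v ∈ S then w S else 0) := Finset.sum_comm
      _ = ∑ v ∈ V, p := by
          refine Finset.sum_congr rfl fun v _ => ?_
          rw [← Finset.sum_filter]
          have heq : (V.powerset.filter fun S => v ∈ S)
              = (V.powerset.filter fun S => {v} ⊆ S) := by
            apply Finset.filter_congr
            intro S _
            simp
          rw [heq]
          simpa using sum_weight_superset p V {v} (Finset.subset_univ _)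
      _ = p * V.card := by simp [mul_comm]
  -- expectation of edge count
  have hsum_count : ∑ S ∈ V.powerset,
      w S * ((H.filter fun e => e ⊆ S).card : ℝ) = H.card * p ^ r := by
    have hc : ∀ S : Finset α, ((H.filter fun e => e ⊆ S).card : ℝ)
        = ∑ e ∈ H, if e ⊆ S then (1:ℝ) else 0 := by
      intro S
      rw [Finset.card_filter]
      push_cast
      rfl
    calc ∑ S ∈ V.powerset, w S * ((H.filter fun e => e ⊆ S).card : ℝ)
        = ∑ S ∈ V.powerset, ∑ e ∈ H, (if e ⊆ S then w S else 0) := by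
          refine Finset.sum_congr rfl fun S _ => ?_
          rw [hc S, Finset.mul_sum]
          refine Finset.sum_congr rfl fun e _ => ?_
          split <;> simp
      _ = ∑ e ∈ H, ∑ S ∈ V.powerset, (if e ⊆ S then w S else 0) := Finset.sum_comm
      _ = ∑ e ∈ H, p ^ r := by
          refine Finset.sum_congr rfl fun e he => ?_
          rw [← Finset.sum_filter]
          have h2 := sum_weight_superset p V e (Finset.subset_univ e)
          rw [hH e he] at h2
          exact h2
      _ = H.card * p ^ r := by simp [mul_comm]
  -- first moment
  have hkey : p * (Fintype.card α : ℝ) - (H.card : ℝ) * p ^ r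
      ≤ ∑ S ∈ V.powerset, w S * ((S.card : ℝ) - ((H.filter fun e => e ⊆ S).card : ℝ)) := by
    have hsplit : ∑ S ∈ V.powerset,
        w S * ((S.card : ℝ) - ((H.filter fun e => e ⊆ S).card : ℝ))
        = p * V.card - H.card * p ^ r := by
      rw [← hsum_card, ← hsum_count, ← Finset.sum_sub_distrib]
      exact Finset.sum_congr rfl fun S _ => by ring
    rw [hsplit, show (V.card : ℝ) = (Fintype.card α : ℝ) by simp [V]]
  obtain ⟨S, _, hS⟩ := exists_ge_of_wsum _ w _ (fun b _ => hwnn b) hwsum _ hkey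
  have hne : ∀ e ∈ H, e.Nonempty := fun e he => by
    rw [← Finset.card_pos, hH e he]; omega
  obtain ⟨X, _, hXind, hXcard⟩ := deletion H hne S
  refine ⟨X, hXind, ?_⟩
  have : (S.card : ℝ) ≤ (X.card : ℝ) + ((H.filter fun e => e ⊆ S).card : ℝ) := by
    exact_mod_cast hXcard
  linarith


end AuxSpencer


/-- Spencer's bound: an `r`-uniform hypergraph on `n` vertices with average degree
`d ≥ 1` has an independent set of size at least `0.5 * n / d^(1/(r-1))`. -/
theorem spencer_independence {α : Type*} [DecidableEq α] [Fintype α] (r : ℕ)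
    (hr : 2 ≤ r) (H : Finset (Finset α)) (hH : ∀ e ∈ H, e.card = r)
    (hd : 1 ≤ ((r : ℝ) * (H.card : ℝ) / (Fintype.card α : ℝ))) :
    ∃ X : Finset α, IndepIn (↑H : Set (Finset α)) X ∧
      0.5 * (Fintype.card α : ℝ) /
        ((r : ℝ) * (H.card : ℝ) / (Fintype.card α : ℝ)) ^ ((1 : ℝ) / ((r : ℝ) - 1))
        ≤ (X.card : ℝ) := by
  classical
  have hn0 : 0 < Fintype.card α := by
    by_contra h
    push_neg at h
    have h0 : Fintype.card α = 0 := by omega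
    rw [h0] at hd
    norm_num at hd
  have hm0 : 0 < H.card := by
    by_contra h
    push_neg at h
    have h0 : H.card = 0 := by omega
    rw [h0] at hd
    norm_num at hd
  have hnR : (0:ℝ) < (Fintype.card α : ℝ) := by exact_mod_cast hn0
  have hmR : (0:ℝ) < (H.card : ℝ) := by exact_mod_cast hm0
  have hrR : (0:ℝ) < (r : ℝ) := by positivity
  have hd0 : (0:ℝ) < (r : ℝ) * (H.card : ℝ) / (Fintype.card α : ℝ) := by positivity
  have hr1 : (0:ℝ) < (r:ℝ) - 1 := by
    have : (2:ℝ) ≤ (r:ℝ) := by exact_mod_cast hr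
    linarith
  set d : ℝ := (r : ℝ) * (H.card : ℝ) / (Fintype.card α : ℝ) with hdd
  obtain ⟨X, hXind, hX⟩ := spencer_aux r hr H hH (d ^ (-((1:ℝ) / ((r:ℝ) - 1))))
    (Real.rpow_pos_of_pos hd0 _)
    (Real.rpow_le_one_of_one_le_of_nonpos hd (by rw [neg_nonpos]; positivity))
  refine ⟨X, hXind, le_trans ?_ hX⟩
  set p : ℝ := d ^ (-((1:ℝ) / ((r:ℝ) - 1))) with hp
  have hp0 : 0 < p := Real.rpow_pos_of_pos hd0 _
  have hpr1 : p ^ (r - 1) = d⁻¹ := by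
    rw [hp, ← Real.rpow_natCast (d ^ (-((1:ℝ) / ((r:ℝ) - 1)))) (r-1), ← Real.rpow_mul hd0.le]
    have hcast : ((r - 1 : ℕ) : ℝ) = (r:ℝ) - 1 := by
      have h1 : 1 ≤ r := by omega
      push_cast [Nat.cast_sub h1]
      ring
    rw [hcast, neg_mul, one_div, inv_mul_cancel₀ (ne_of_gt hr1), Real.rpow_neg_one]
  have hpr : (H.card:ℝ) * p ^ r = p * (Fintype.card α : ℝ) / r := by
    have hsplit : p ^ r = p * p ^ (r - 1) := by
      rw [← pow_succ']
      congr 1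
      omega
    rw [hsplit, hpr1, hdd]
    field_simp
  have hgoal : 0.5 * (Fintype.card α : ℝ) / d ^ ((1:ℝ) / ((r:ℝ) - 1))
      = p * (Fintype.card α : ℝ) / 2 := by
    rw [hp, Real.rpow_neg hd0.le, div_eq_mul_inv]
    ring
  rw [hgoal, hpr]
  have h2r : p * (Fintype.card α : ℝ) / r ≤ p * (Fintype.card α : ℝ) / 2 := by
    apply div_le_div_of_nonneg_left (by positivity) (by norm_num)
    exact_mod_cast hr
  linarith
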